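/- Let S be a set and R ⊆ S × S a relation. For all μ, ν ∈ D(S), μ is related to ν by the lifting of R to D(S) × D(S) if and only if there exists a finitely supported probability distribution w ∈ D(S × S) whose support is contained in R and whose marginals are μ and ν, i.e., ∑_{t∈S} w(s,t) = μ(s) for every s ∈ S and ∑_{s∈S} w(s,t) = ν(t) for every t ∈ S. -/

import Mathlib

/-- A finitely supported probability distribution over `S`. -/
structure ProbDist (S : Type) where
  f : S → ℝ
  nonneg : ∀ s, 0 ≤ f s
  finSupp : (Function.support f).Finite
  sum_one : ∑ᶠ s, f s = 1

/-- The point distribution assigning probability 1 to `s`. -/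
noncomputable def ProbDist.point {S : Type} (s : S) : ProbDist S where
  f := Set.indicator {s} (fun _ => (1 : ℝ))
  nonneg t := Set.indicator_nonneg (fun _ _ => zero_le_one) t
  finSupp := (Set.finite_singleton s).subset (by
    intro t ht
    by_contra h
    exact ht (Set.indicator_of_notMem h _))
  sum_one := by
    rw [finsum_eq_single _ s]
    · simp
    · intro x hx
      simp [Set.indicator_of_notMem, hx]

/-- The lifting of a relation `R ⊆ S × D(S)` to `D(S) × D(S)`:
the smallest relation containing `(δ_s, ν)` whenever `R s ν`, and closed under
finite convex combinations. -/
inductive ProbDist.Lift {S : Type} (R : S → ProbDist S → Prop) :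
    ProbDist S → ProbDist S → Prop
  | basic {s : S} {ν : ProbDist S} : R s ν → ProbDist.Lift R (ProbDist.point s) ν
  | lin {n : ℕ} (p : Fin n → ℝ) (μs νs : Fin n → ProbDist S)
      (hp : ∀ i, p i ∈ Set.Icc (0 : ℝ) 1) (hpsum : ∑ i, p i = 1)
      (h : ∀ i, ProbDist.Lift R (μs i) (νs i)) {μ ν : ProbDist S}
      (hμ : ∀ s, μ.f s = ∑ i, p i * (μs i).f s)
      (hν : ∀ s, ν.f s = ∑ i, p i * (νs i).f s) :
      ProbDist.Lift R μ ν

/-- Lifting of a relation `R ⊆ S × S` on states: first form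
`R̂ = {(s, δ_t) : s R t} ⊆ S × D(S)`, then lift. -/
def ProbDist.LiftRel {S : Type} (R : S → S → Prop) : ProbDist S → ProbDist S → Prop :=
  ProbDist.Lift (fun s ν => ∃ t, R s t ∧ ν = ProbDist.point t)


section Aux

open Function
open scoped Classical

variable {S : Type}

lemma ProbDist.point_f {a b : S} : (ProbDist.point a).f b = if b = a then 1 else 0 := by
  simp [ProbDist.point, Set.indicator_apply, Pi.single_apply]

lemma ProbDist.f_le_one (w : ProbDist S) (s : S) : w.f s ≤ 1 := by
  classical
  rw [← w.sum_one, finsum_eq_sum _ w.finSupp]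
  by_cases h : w.f s = 0
  · rw [h]; exact Finset.sum_nonneg fun i _ => w.nonneg i
  · exact Finset.single_le_sum (fun i _ => w.nonneg i) (w.finSupp.mem_toFinset.2 h)

lemma slice_fst_finite (w : ProbDist (S × S)) (s : S) :
    (Function.support fun t => w.f (s, t)).Finite := by
  have : (Function.support fun t => w.f (s, t)) ⊆ (fun t => (s, t)) ⁻¹' (Function.support w.f) :=
    fun t ht => ht
  exact ((w.finSupp).preimage (fun a _ b _ h => (Prod.mk.injEq _ _ _ _ ▸ h).2)).subset this

lemma slice_snd_finite (w : ProbDist (S × S)) (t : S) :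
    (Function.support fun s => w.f (s, t)).Finite := by
  have : (Function.support fun s => w.f (s, t)) ⊆ (fun s => (s, t)) ⁻¹' (Function.support w.f) :=
    fun s hs => hs
  exact ((w.finSupp).preimage (fun a _ b _ h => (Prod.mk.injEq _ _ _ _ ▸ h).1)).subset this

lemma marg_fst (w : ProbDist (S × S)) (s : S) :
    ∑ᶠ t, w.f (s, t) = ∑ x ∈ w.finSupp.toFinset, if x.1 = s then w.f x else 0 := by
  classical
  set F := w.finSupp.toFinset with hF
  set T := F.image Prod.snd with hT
  have hsub : Function.support (fun t => w.f (s, t)) ⊆ ↑T := by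
    intro t ht
    simp only [hT, Finset.coe_image, Set.mem_image, Finset.mem_coe]
    exact ⟨(s, t), by simpa [hF, Set.Finite.mem_toFinset] using ht, rfl⟩
  rw [finsum_eq_sum_of_support_subset _ hsub, ← Finset.sum_filter]
  have hinj : ∀ x ∈ T, ∀ y ∈ T, (s, x) = (s, y) → x = y := by
    intro x _ y _ h; exact (Prod.mk.injEq _ _ _ _ ▸ h).2
  have himg : ∑ x ∈ T.image (fun u => (s, u)), w.f x = ∑ u ∈ T, w.f (s, u) :=
    Finset.sum_image hinj
  rw [← himg]
  refine (Finset.sum_subset ?_ ?_).symm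
  · intro x hx
    simp only [Finset.mem_filter] at hx
    simp only [Finset.mem_image]
    exact ⟨x.2, Finset.mem_image_of_mem _ hx.1, by rw [← hx.2]⟩
  · intro x hxB hxA
    by_contra h
    apply hxA
    simp only [Finset.mem_image] at hxB
    obtain ⟨t, _, rfl⟩ := hxB
    exact Finset.mem_filter.2 ⟨w.finSupp.mem_toFinset.2 h, rfl⟩

lemma marg_snd (w : ProbDist (S × S)) (t : S) :
    ∑ᶠ s, w.f (s, t) = ∑ x ∈ w.finSupp.toFinset, if x.2 = t then w.f x else 0 := by
  classical
  set F := w.finSupp.toFinset with hF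
  set T := F.image Prod.fst with hT
  have hsub : Function.support (fun s => w.f (s, t)) ⊆ ↑T := by
    intro s hs
    simp only [hT, Finset.coe_image, Set.mem_image, Finset.mem_coe]
    exact ⟨(s, t), by simpa [hF, Set.Finite.mem_toFinset] using hs, rfl⟩
  rw [finsum_eq_sum_of_support_subset _ hsub, ← Finset.sum_filter]
  have hinj : ∀ x ∈ T, ∀ y ∈ T, (x, t) = (y, t) → x = y := by
    intro x _ y _ h; exact (Prod.mk.injEq _ _ _ _ ▸ h).1
  have himg : ∑ x ∈ T.image (fun u => (u, t)), w.f x = ∑ u ∈ T, w.f (u, t) :=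
    Finset.sum_image hinj
  rw [← himg]
  refine (Finset.sum_subset ?_ ?_).symm
  · intro x hx
    simp only [Finset.mem_filter] at hx
    simp only [Finset.mem_image]
    exact ⟨x.1, Finset.mem_image_of_mem _ hx.1, by rw [← hx.2]⟩
  · intro x hxB hxA
    by_contra h
    apply hxA
    simp only [Finset.mem_image] at hxB
    obtain ⟨s, _, rfl⟩ := hxB
    exact Finset.mem_filter.2 ⟨w.finSupp.mem_toFinset.2 h, rfl⟩

/-- Convex combination of finitely many distributions. -/
noncomputable def ProbDist.mix {n : ℕ} (p : Fin n → ℝ) (hp : ∀ i, 0 ≤ p i)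
    (hpsum : ∑ i, p i = 1) (ws : Fin n → ProbDist S) : ProbDist S where
  f s := ∑ i, p i * (ws i).f s
  nonneg s := Finset.sum_nonneg fun i _ => mul_nonneg (hp i) ((ws i).nonneg s)
  finSupp := (Set.finite_iUnion fun i => (ws i).finSupp).subset (by
    intro s hs
    rw [Function.mem_support] at hs
    by_contra h
    simp only [Set.mem_iUnion, Function.mem_support, not_exists, not_not] at h
    exact hs (Finset.sum_eq_zero fun i _ => by rw [h i, mul_zero]))
  sum_one := by
    rw [finsum_sum_comm _ _ (fun i _ => ((ws i).finSupp.subset (by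
      intro s hs
      rw [Function.mem_support] at hs ⊢
      exact fun h0 => hs (by rw [h0, mul_zero]))))]
    calc ∑ i, ∑ᶠ s, p i * (ws i).f s = ∑ i, p i * ∑ᶠ s, (ws i).f s := by
          refine Finset.sum_congr rfl fun i _ => ?_
          rw [mul_finsum _ _]
      _ = 1 := by simp only [ProbDist.sum_one, mul_one, hpsum]

end Aux

/-- Coupling characterisation of the lifting of a state relation: `μ lift(R) ν` iff there
is a finitely supported probability distribution `w` on `S × S` supported on `R`
whose marginals are `μ` and `ν`. -/
theorem liftRel_iff_coupling {S : Type} (R : S → S → Prop) (μ ν : ProbDist S) :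
    ProbDist.LiftRel R μ ν ↔
      ∃ w : ProbDist (S × S),
        (∀ s t, 0 < w.f (s, t) → R s t) ∧
        (∀ s, ∑ᶠ t, w.f (s, t) = μ.f s) ∧
        (∀ t, ∑ᶠ s, w.f (s, t) = ν.f t) := by
  constructor
  · intro h
    induction h with
    | @basic s ν hsv =>
      obtain ⟨t, hRt, rfl⟩ := hsv
      refine ⟨ProbDist.point (s, t), ?_, ?_, ?_⟩
      · intro a b hpos
        have : (a, b) = (s, t) := by
          by_contra hne
          rw [ProbDist.point_f, if_neg hne] at hpos
          exact lt_irrefl _ hpos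
        rw [Prod.mk.injEq] at this
        rw [this.1, this.2]; exact hRt
      · intro a
        by_cases ha : a = s
        · subst ha
          rw [finsum_eq_single _ t, ProbDist.point_f, if_pos rfl, ProbDist.point_f, if_pos rfl]
          intro b hb
          rw [ProbDist.point_f, if_neg (by simp [hb])]
        · rw [ProbDist.point_f, if_neg ha,
            finsum_eq_zero_of_forall_eq_zero (fun b => by
              rw [ProbDist.point_f, if_neg (by simp [ha])])]
      · intro b
        by_cases hb : b = t
        · subst hb
          rw [finsum_eq_single _ s, ProbDist.point_f, if_pos rfl, ProbDist.point_f, if_pos rfl]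
          intro a ha
          rw [ProbDist.point_f, if_neg (by simp [ha])]
        · rw [ProbDist.point_f, if_neg hb,
            finsum_eq_zero_of_forall_eq_zero (fun a => by
              rw [ProbDist.point_f, if_neg (by simp [hb])])]
    | lin p μs νs hp hpsum hrel hμ hν ih =>
      choose ws h1 h2 h3 using ih
      refine ⟨ProbDist.mix p (fun i => (hp i).1) hpsum ws, ?_, ?_, ?_⟩
      · intro s t hpos
        replace hpos : 0 < ∑ i, p i * (ws i).f (s, t) := hpos
        obtain ⟨i, _, hi⟩ := Finset.exists_ne_zero_of_sum_ne_zero (ne_of_gt hpos)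
        have hwi : (ws i).f (s, t) ≠ 0 := fun h0 => hi (by rw [h0, mul_zero])
        exact h1 i s t (lt_of_le_of_ne ((ws i).nonneg _) (Ne.symm hwi))
      · intro s
        show ∑ᶠ t, ∑ i, p i * (ws i).f (s, t) = _
        rw [finsum_sum_comm _ _ (fun i _ => (slice_fst_finite (ws i) s).subset (by
          intro t ht
          rw [Function.mem_support] at ht ⊢
          exact fun h0 => ht (by rw [h0, mul_zero]))), hμ]
        refine Finset.sum_congr rfl fun i _ => ?_
        rw [← mul_finsum _ _, h2 i s]
      · intro t
        show ∑ᶠ s, ∑ i, p i * (ws i).f (s, t) = _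
        rw [finsum_sum_comm _ _ (fun i _ => (slice_snd_finite (ws i) t).subset (by
          intro s hs
          rw [Function.mem_support] at hs ⊢
          exact fun h0 => hs (by rw [h0, mul_zero]))), hν]
        refine Finset.sum_congr rfl fun i _ => ?_
        rw [← mul_finsum _ _, h3 i t]
  · rintro ⟨w, hR, hμ, hν⟩
    classical
    set F := w.finSupp.toFinset with hF
    let e := F.equivFin
    have hmem : ∀ i : Fin F.card, w.f (e.symm i : S × S) ≠ 0 := fun i =>
      w.finSupp.mem_toFinset.1 (e.symm i).2
    have hpos : ∀ i : Fin F.card, 0 < w.f (e.symm i : S × S) := fun i =>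
      lt_of_le_of_ne (w.nonneg _) (Ne.symm (hmem i))
    refine ProbDist.Lift.lin (fun i => w.f (e.symm i : S × S))
      (fun i => ProbDist.point (e.symm i : S × S).1)
      (fun i => ProbDist.point (e.symm i : S × S).2)
      (fun i => ⟨w.nonneg _, w.f_le_one _⟩) ?_ ?_ ?_ ?_
    · rw [← w.sum_one, finsum_eq_sum _ w.finSupp, ← hF, ← Finset.sum_coe_sort F w.f]
      exact Fintype.sum_equiv e.symm (fun i => w.f (e.symm i : S × S))
        (fun x : F => w.f (x : S × S)) (fun i => rfl)
    · intro i
      exact ProbDist.Lift.basic ⟨(e.symm i : S × S).2,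
        hR _ _ (by simpa using hpos i), rfl⟩
    · intro s
      rw [← hμ s, marg_fst w s, ← hF,
        ← Finset.sum_coe_sort F (fun x => if x.1 = s then w.f x else 0)]
      refine Fintype.sum_equiv e _ _ fun x => ?_
      simp only [Equiv.symm_apply_apply]
      rw [ProbDist.point_f]
      by_cases h : (x : S × S).1 = s
      · simp [h]
      · rw [if_neg h, if_neg (fun hh => h hh.symm), mul_zero]
    · intro t
      rw [← hν t, marg_snd w t, ← hF,
        ← Finset.sum_coe_sort F (fun x => if x.2 = t then w.f x else 0)]
      refine Fintype.sum_equiv e _ _ fun x => ?_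
      simp only [Equiv.symm_apply_apply]
      rw [ProbDist.point_f]
      by_cases h : (x : S × S).2 = t
      · simp [h]
      · rw [if_neg h, if_neg (fun hh => h hh.symm), mul_zero]
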